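/- arXiv:1609.07985 — 4 statements merged into one kernel-verified Lean document; each statement's English description precedes it below -/
import Mathlib

section
/- Let f be a rational function of p₁,…,p_n and c = (c₁,…,c_m) a tuple of rational functions. If the gradient ∇f lies in the row span (over the field ℝ(p₁,…,p_n)) of the Jacobian matrix J(c), then f is algebraic over ℝ(c₁,…,c_m). -/
set_option synthInstance.maxHeartbeats 1000000
set_option maxHeartbeats 1000000

noncomputable section JacAuxSection

namespace JacAux

open Polynomial IntermediateField

variable {L : Type*} [Field L] [Algebra ℝ L]

variable (E : IntermediateField ℝ L) (t : L) (D : Derivation ℝ E L)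

def Phi (Q : Polynomial E) : L :=
  PolynomialModule.eval t
    (PolynomialModule.map L (LinearMap.id : L →ₗ[E] L) (D.mapCoeffs Q))

lemma Phi_add (P Q : Polynomial E) : Phi E t D (P + Q) = Phi E t D P + Phi E t D Q := by
  simp [Phi, map_add]
lemma Phi_sub (P Q : Polynomial E) : Phi E t D (P - Q) = Phi E t D P - Phi E t D Q := by
  simp [Phi, map_sub]
lemma Phi_zero : Phi E t D 0 = 0 := by simp [Phi]
lemma Phi_C (e : E) : Phi E t D (C e) = D e := by simp [Phi]
lemma Phi_X : Phi E t D X = 0 := by simp [Phi]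
lemma Phi_mul (P Q : Polynomial E) :
    Phi E t D (P * Q) = aeval t P * Phi E t D Q + aeval t Q * Phi E t D P := by
  have h := D.mapCoeffs.leibniz P Q
  simp only [Phi, h, map_add, PolynomialModule.map_smul, PolynomialModule.eval_smul]
  simp [Polynomial.eval_map, ← Polynomial.aeval_def, smul_eq_mul]

/-- The candidate derivation on `E[X]`, evaluated at `t`, sending `X` to `s'`. -/
def Delta (s' : L) (Q : Polynomial E) : L :=
  Phi E t D Q + aeval t (derivative Q) * s'

lemma Delta_add (s' : L) (P Q : Polynomial E) :
    Delta E t D s' (P + Q) = Delta E t D s' P + Delta E t D s' Q := by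
  unfold Delta
  rw [Phi_add, derivative_add, map_add]
  ring
lemma Delta_sub (s' : L) (P Q : Polynomial E) :
    Delta E t D s' (P - Q) = Delta E t D s' P - Delta E t D s' Q := by
  unfold Delta
  rw [Phi_sub, derivative_sub, map_sub]
  ring
lemma Delta_zero (s' : L) : Delta E t D s' 0 = 0 := by simp [Delta, Phi_zero]
lemma Delta_C (s' : L) (e : E) : Delta E t D s' (C e) = D e := by
  simp [Delta, Phi_C]
lemma Delta_one (s' : L) : Delta E t D s' 1 = 0 := by
  rw [← Polynomial.C_1, Delta_C]
  exact D.map_one_eq_zero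
lemma Delta_X (s' : L) : Delta E t D s' X = s' := by simp [Delta, Phi_X]
lemma Delta_mul (s' : L) (P Q : Polynomial E) :
    Delta E t D s' (P * Q) =
      aeval t P * Delta E t D s' Q + aeval t Q * Delta E t D s' P := by
  simp only [Delta, Phi_mul, derivative_mul, map_add, map_mul]; ring

lemma charZero_inter : CharZero E :=
  charZero_of_injective_algebraMap (algebraMap ℝ E).injective

lemma exists_good (s : L) :
    ∃ s' : L, (∀ Q : Polynomial E, aeval t Q = 0 → Delta E t D s' Q = 0) ∧
      (Transcendental E t → s' = s) := by
  haveI : CharZero E := charZero_inter E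
  by_cases halg : IsAlgebraic E t
  · have hint : IsIntegral E t := halg.isIntegral
    have hP0 : aeval t (minpoly E t) = 0 := minpoly.aeval E t
    have hsep : (minpoly E t).Separable := (minpoly.irreducible hint).separable
    have hder : aeval t (derivative (minpoly E t)) ≠ 0 :=
      hsep.aeval_derivative_ne_zero hP0
    refine ⟨-(Phi E t D (minpoly E t)) / aeval t (derivative (minpoly E t)),
      fun Q hQ => ?_, fun htr => absurd halg htr⟩
    have hDP : Delta E t D (-(Phi E t D (minpoly E t)) / aeval t (derivative (minpoly E t)))
        (minpoly E t) = 0 := by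
      unfold Delta; field_simp; ring
    obtain ⟨R, rfl⟩ := minpoly.dvd E t hQ
    rw [Delta_mul, hP0, hDP, mul_zero, zero_mul, add_zero]
  · refine ⟨s, fun Q hQ => ?_, fun _ => rfl⟩
    have hinj : Function.Injective (Polynomial.aeval t : Polynomial E →ₐ[E] L) :=
      transcendental_iff_injective.mp halg
    have : Q = 0 := by
      apply hinj; simpa using hQ
    simp [this, Delta_zero]


/-- Quotient-rule expression for the derivation of `aeval t P / aeval t Q`. -/
def Expr (s' : L) (P Q : Polynomial E) : L :=
  (Delta E t D s' P * aeval t Q - aeval t P * Delta E t D s' Q) / (aeval t Q) ^ 2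

lemma Expr_welldef (s' : L)
    (hker : ∀ Q : Polynomial E, aeval t Q = 0 → Delta E t D s' Q = 0)
    {P₁ Q₁ P₂ Q₂ : Polynomial E} (h₁ : aeval t Q₁ ≠ 0) (h₂ : aeval t Q₂ ≠ 0)
    (h : aeval t P₁ / aeval t Q₁ = aeval t P₂ / aeval t Q₂) :
    Expr E t D s' P₁ Q₁ = Expr E t D s' P₂ Q₂ := by
  have hcross : aeval t P₁ * aeval t Q₂ = aeval t P₂ * aeval t Q₁ :=
    (div_eq_div_iff h₁ h₂).mp h
  have hk0 : Delta E t D s' (P₁ * Q₂ - P₂ * Q₁) = 0 := by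
    refine hker _ ?_
    rw [map_sub, map_mul, map_mul, hcross, sub_self]
  rw [Delta_sub, sub_eq_zero, Delta_mul, Delta_mul] at hk0
  unfold Expr
  rw [div_eq_div_iff (pow_ne_zero 2 h₁) (pow_ne_zero 2 h₂)]
  linear_combination (aeval t Q₁ * aeval t Q₂) * hk0 -
    (Delta E t D s' Q₂ * aeval t Q₁ + Delta E t D s' Q₁ * aeval t Q₂) * hcross

lemma Expr_add (s' : L) {P₁ Q₁ P₂ Q₂ : Polynomial E}
    (h₁ : aeval t Q₁ ≠ 0) (h₂ : aeval t Q₂ ≠ 0) :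
    Expr E t D s' (P₁ * Q₂ + P₂ * Q₁) (Q₁ * Q₂) =
      Expr E t D s' P₁ Q₁ + Expr E t D s' P₂ Q₂ := by
  unfold Expr
  rw [Delta_add, Delta_mul, Delta_mul, Delta_mul, map_add, map_mul, map_mul, map_mul]
  field_simp
  ring

lemma Expr_mul (s' : L) {P₁ Q₁ P₂ Q₂ : Polynomial E}
    (h₁ : aeval t Q₁ ≠ 0) (h₂ : aeval t Q₂ ≠ 0) :
    Expr E t D s' (P₁ * P₂) (Q₁ * Q₂) =
      (aeval t P₁ / aeval t Q₁) * Expr E t D s' P₂ Q₂ +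
      (aeval t P₂ / aeval t Q₂) * Expr E t D s' P₁ Q₁ := by
  unfold Expr
  rw [Delta_mul, Delta_mul, map_mul, map_mul]
  field_simp
  ring

lemma Expr_C (s' : L) (e : E) : Expr E t D s' (C e) 1 = D e := by
  unfold Expr
  rw [Delta_C, Delta_one, map_one]
  simp

lemma Expr_X (s' : L) : Expr E t D s' X 1 = s' := by
  unfold Expr
  rw [Delta_X, Delta_one, map_one]
  simp

lemma Expr_algebraMap_mul (s' : L) (r : ℝ) (P Q : Polynomial E) :
    Expr E t D s' (C (algebraMap ℝ E r) * P) Q = algebraMap ℝ L r * Expr E t D s' P Q := by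
  have halg : algebraMap E L (algebraMap ℝ E r) = algebraMap ℝ L r :=
    (IsScalarTower.algebraMap_apply ℝ E L r).symm
  unfold Expr
  rw [Delta_mul, Delta_C, D.map_algebraMap, map_mul, aeval_C, halg]
  ring


/-- The raw underlying function of the extended derivation. -/
def raw (s' : L) (x : L) : L :=
  letI := Classical.propDecidable (∃ PQ : Polynomial E × Polynomial E,
      aeval t PQ.2 ≠ 0 ∧ x = aeval t PQ.1 / aeval t PQ.2)
  if hx : ∃ PQ : Polynomial E × Polynomial E,
      aeval t PQ.2 ≠ 0 ∧ x = aeval t PQ.1 / aeval t PQ.2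
  then Expr E t D s' hx.choose.1 hx.choose.2 else 0

lemma raw_eq (s' : L)
    (hker : ∀ Q : Polynomial E, aeval t Q = 0 → Delta E t D s' Q = 0)
    (P Q : Polynomial E) (hQ : aeval t Q ≠ 0) :
    raw E t D s' (aeval t P / aeval t Q) = Expr E t D s' P Q := by
  have hx : ∃ PQ : Polynomial E × Polynomial E,
      aeval t PQ.2 ≠ 0 ∧ aeval t P / aeval t Q = aeval t PQ.1 / aeval t PQ.2 :=
    ⟨(P, Q), hQ, rfl⟩
  unfold raw
  rw [dif_pos hx]
  exact Expr_welldef E t D s' hker hx.choose_spec.1 hQ hx.choose_spec.2.symm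

theorem exists_simple_ext (s : L) :
    ∃ (F : IntermediateField ℝ L) (hle : E ≤ F) (htF : t ∈ F)
      (D' : Derivation ℝ F L),
      (∀ x : E, D' (inclusion hle x) = D x) ∧
      (Transcendental E t → D' ⟨t, htF⟩ = s) := by
  obtain ⟨s', hker, hs'⟩ := exists_good E t D s
  set A : IntermediateField E L := IntermediateField.adjoin E {t} with hA
  have htA : t ∈ A := IntermediateField.mem_adjoin_simple_self E t
  have hle : E ≤ A.restrictScalars ℝ := by
    intro x hx
    have : algebraMap E L ⟨x, hx⟩ ∈ A := A.algebraMap_mem ⟨x, hx⟩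
    exact this
  -- representation of elements of A
  have hrep : ∀ x : L, x ∈ A → ∃ PQ : Polynomial E × Polynomial E,
      aeval t PQ.2 ≠ 0 ∧ x = aeval t PQ.1 / aeval t PQ.2 := by
    intro x hx
    rw [IntermediateField.mem_adjoin_simple_iff] at hx
    obtain ⟨r, u, hx⟩ := hx
    by_cases hu : aeval t u = 0
    · refine ⟨(0, 1), by simp, by simp [hx, hu]⟩
    · exact ⟨(r, u), hu, hx⟩
  have raw_add : ∀ x y : L, x ∈ A → y ∈ A →
      raw E t D s' (x + y) = raw E t D s' x + raw E t D s' y := by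
    intro x y hx hy
    obtain ⟨⟨P₁, Q₁⟩, hQ₁, hxe⟩ := hrep x hx
    obtain ⟨⟨P₂, Q₂⟩, hQ₂, hye⟩ := hrep y hy
    have hsum : x + y = aeval t (P₁ * Q₂ + P₂ * Q₁) / aeval t (Q₁ * Q₂) := by
      rw [hxe, hye, map_add, map_mul, map_mul, map_mul]
      field_simp
      try ring
    rw [hsum, hxe, hye, raw_eq E t D s' hker _ _ (by rw [map_mul]; exact mul_ne_zero hQ₁ hQ₂),
      raw_eq E t D s' hker _ _ hQ₁, raw_eq E t D s' hker _ _ hQ₂]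
    exact Expr_add E t D s' hQ₁ hQ₂
  have raw_mul : ∀ x y : L, x ∈ A → y ∈ A →
      raw E t D s' (x * y) = x * raw E t D s' y + y * raw E t D s' x := by
    intro x y hx hy
    obtain ⟨⟨P₁, Q₁⟩, hQ₁, hxe⟩ := hrep x hx
    obtain ⟨⟨P₂, Q₂⟩, hQ₂, hye⟩ := hrep y hy
    have hprod : x * y = aeval t (P₁ * P₂) / aeval t (Q₁ * Q₂) := by
      rw [hxe, hye, map_mul, map_mul]
      field_simp
    rw [hprod, hxe, hye, raw_eq E t D s' hker _ _ (by rw [map_mul]; exact mul_ne_zero hQ₁ hQ₂),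
      raw_eq E t D s' hker _ _ hQ₁, raw_eq E t D s' hker _ _ hQ₂,
      Expr_mul E t D s' hQ₁ hQ₂]
  have raw_coeE : ∀ x : E, raw E t D s' (x : L) = D x := by
    intro x
    have hx1 : (x : L) = aeval t (C x) / aeval t (1 : Polynomial E) := by
      rw [aeval_C, map_one, div_one]; rfl
    rw [hx1, raw_eq E t D s' hker _ _ (by rw [map_one]; exact one_ne_zero), Expr_C]
  have raw_t : raw E t D s' t = s' := by
    have ht1 : t = aeval t (X : Polynomial E) / aeval t (1 : Polynomial E) := by
      rw [aeval_X, map_one, div_one]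
    nth_rewrite 2 [ht1]
    rw [raw_eq E t D s' hker _ _ (by rw [map_one]; exact one_ne_zero), Expr_X]
  have raw_one : raw E t D s' 1 = 0 := by
    have h1 : (1 : L) = ((1 : E) : L) := rfl
    rw [h1, raw_coeE 1, Derivation.map_one_eq_zero]
  have raw_smul : ∀ (r : ℝ) (x : L), x ∈ A →
      raw E t D s' (algebraMap ℝ L r * x) = algebraMap ℝ L r * raw E t D s' x := by
    intro r x hx
    obtain ⟨⟨P₁, Q₁⟩, hQ₁, hxe⟩ := hrep x hx
    have hc : algebraMap ℝ L r * x = aeval t (C (algebraMap ℝ E r) * P₁) / aeval t Q₁ := by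
      rw [hxe, map_mul, aeval_C, ← IsScalarTower.algebraMap_apply ℝ E L r, mul_div_assoc]
    rw [hc, hxe, raw_eq E t D s' hker _ _ hQ₁, raw_eq E t D s' hker _ _ hQ₁,
      Expr_algebraMap_mul]
  -- assemble the derivation
  refine ⟨A.restrictScalars ℝ, hle, htA, ?_, ?_, ?_⟩
  · exact
    { toFun := fun x => raw E t D s' (x : L)
      map_add' := fun x y => raw_add _ _ x.2 y.2
      map_smul' := fun r x => by
        have hcoe : ((r • x : A.restrictScalars ℝ) : L) = algebraMap ℝ L r * (x : L) := by
          show r • (x : L) = _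
          rw [Algebra.smul_def]
        simp only [RingHom.id_apply]
        rw [hcoe, raw_smul r _ x.2, Algebra.smul_def]
      map_one_eq_zero' := raw_one
      leibniz' := fun x y => by
        have hcoe : ((x * y : A.restrictScalars ℝ) : L) = (x : L) * (y : L) := rfl
        simp only [LinearMap.coe_mk, AddHom.coe_mk, Algebra.smul_def]
        rw [hcoe, raw_mul _ _ x.2 y.2]
        rfl }
  · intro x
    exact raw_coeE x
  · intro htr
    show raw E t D s' t = s
    rw [raw_t, hs' htr]


theorem exists_list_ext (l : List L) (E : IntermediateField ℝ L) (D : Derivation ℝ E L) :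
    ∃ (E' : IntermediateField ℝ L) (hle : E ≤ E') (D' : Derivation ℝ E' L),
      (∀ x ∈ l, x ∈ E') ∧ (∀ x : E, D' (inclusion hle x) = D x) := by
  induction l generalizing E D with
  | nil =>
    exact ⟨E, le_refl E, D, by simp, fun x => by rw [inclusion_self]; rfl⟩
  | cons t l ih =>
    obtain ⟨F, hEF, htF, D₁, hres, -⟩ := exists_simple_ext E t D 0
    obtain ⟨E', hFE', D', hmem, hres'⟩ := ih F D₁
    refine ⟨E', le_trans hEF hFE', D', ?_, ?_⟩
    · intro x hx
      rcases List.mem_cons.mp hx with rfl | hx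
      · exact hFE' htF
      · exact hmem x hx
    · intro x
      have h1 : inclusion (le_trans hEF hFE') x = inclusion hFE' (inclusion hEF x) :=
        (inclusion_inclusion hEF hFE' x).symm
      rw [h1, hres' (inclusion hEF x), hres x]

/-- Existence of a global derivation vanishing on `K` with prescribed nonzero
value at a transcendental element. -/
theorem exists_global_derivation (K : IntermediateField ℝ L) {f : L}
    (hf : Transcendental K f) (gens : List L)
    (htop : ∀ M : IntermediateField ℝ L, (∀ x ∈ K, x ∈ M) → (∀ x ∈ gens, x ∈ M) →
      ∀ y : L, y ∈ M) :
    ∃ D : Derivation ℝ L L, (∀ x ∈ K, D x = 0) ∧ D f = 1 := by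
  obtain ⟨F, hKF, hfF, D₀, hres₀, htr₀⟩ :=
    exists_simple_ext K f (0 : Derivation ℝ K L) 1
  obtain ⟨E', hFE', D', hmem, hres'⟩ := exists_list_ext gens F D₀
  have hKE' : ∀ x ∈ K, x ∈ E' := fun x hx => hFE' (hKF hx)
  have htop' : ∀ y : L, y ∈ E' := htop E' hKE' hmem
  -- flatten `D'` to a derivation on `L`
  refine ⟨{ toFun := fun x => D' ⟨x, htop' x⟩
            map_add' := fun x y => by
              have h : (⟨x + y, htop' _⟩ : E') = ⟨x, htop' x⟩ + ⟨y, htop' y⟩ := rfl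
              show D' ⟨x + y, htop' _⟩ = D' ⟨x, htop' x⟩ + D' ⟨y, htop' y⟩
              rw [h, map_add]
            map_smul' := fun r x => by
              have h : (⟨r • x, htop' _⟩ : E') = r • ⟨x, htop' x⟩ := rfl
              show D' ⟨r • x, htop' _⟩ = (RingHom.id ℝ) r • D' ⟨x, htop' x⟩
              rw [h, Derivation.map_smul]
              rfl
            map_one_eq_zero' := by
              have : (⟨(1 : L), htop' 1⟩ : E') = 1 := rfl
              simp only [LinearMap.coe_mk, AddHom.coe_mk, this]
              exact D'.map_one_eq_zero
            leibniz' := fun x y => by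
              have h1 : (⟨x * y, htop' _⟩ : E') = ⟨x, htop' x⟩ * ⟨y, htop' y⟩ := rfl
              simp only [LinearMap.coe_mk, AddHom.coe_mk, h1, Derivation.leibniz,
                Algebra.smul_def, smul_eq_mul]
              rfl }, ?_, ?_⟩
  · intro x hx
    show D' ⟨x, htop' x⟩ = 0
    have hxF : x ∈ F := hKF hx
    have h2 : (⟨x, htop' x⟩ : E') = inclusion hFE' ⟨x, hxF⟩ := rfl
    have h3 : (⟨x, hxF⟩ : F) = inclusion hKF ⟨x, hx⟩ := rfl
    rw [h2, hres', h3, hres₀]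
    rfl
  · show D' ⟨f, htop' f⟩ = 1
    have h2 : (⟨f, htop' f⟩ : E') = inclusion hFE' ⟨f, hfF⟩ := rfl
    rw [h2, hres', htr₀ hf]


end JacAux

end JacAuxSection

open MvPolynomial

namespace JacAux

variable {n : ℕ}

local notation "R" => MvPolynomial (Fin n) ℝ
local notation "L" => FractionRing (MvPolynomial (Fin n) ℝ)

/-- Chain rule for a derivation applied to (the image of) a polynomial. -/
lemma D_poly (D : Derivation ℝ L L) (u : R) :
    D (algebraMap R L u) =
      ∑ j, algebraMap R L (pderiv j u) * D (algebraMap R L (X j)) := by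
  induction u using MvPolynomial.induction_on with
  | C r =>
    have h1 : algebraMap R L (MvPolynomial.C r) = algebraMap ℝ L r := by
      rw [IsScalarTower.algebraMap_apply ℝ R L, MvPolynomial.algebraMap_eq]
    simp [h1, D.map_algebraMap, pderiv_C]
  | add p q hp hq =>
    simp only [map_add, hp, hq, ← Finset.sum_add_distrib]
    congr 1
    ext j
    ring
  | mul_X p i hp =>
    have key : ∀ j ∈ Finset.univ, (algebraMap R L (pderiv j (p * X i)) * D (algebraMap R L (X j)))
        = algebraMap R L (X i) * (algebraMap R L (pderiv j p) * D (algebraMap R L (X j)))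
          + (if j = i then algebraMap R L p * D (algebraMap R L (X i)) else 0) := by
      intro j _
      rw [pderiv_mul, map_add, map_mul, map_mul, add_mul]
      congr 1
      · ring
      · by_cases hji : j = i
        · subst hji
          rw [pderiv_X_self, map_one, mul_one, if_pos rfl]
        · rw [pderiv_X_of_ne (Ne.symm hji), map_zero, mul_zero, zero_mul, if_neg hji]
    rw [map_mul, Derivation.leibniz, smul_eq_mul, smul_eq_mul, hp,
      Finset.sum_congr rfl key, Finset.sum_add_distrib, ← Finset.mul_sum,
      Finset.sum_ite_eq' Finset.univ i
        (fun _ => algebraMap R L p * D (algebraMap R L (X i))), if_pos (Finset.mem_univ i)]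
    ring

lemma D_div (D : Derivation ℝ L L) (u v : R) (hv : algebraMap R L v ≠ 0) :
    D (algebraMap R L u / algebraMap R L v) =
      ∑ j, ((algebraMap R L (pderiv j u) * algebraMap R L v -
          algebraMap R L u * algebraMap R L (pderiv j v)) / (algebraMap R L v) ^ 2) *
        D (algebraMap R L (X j)) := by
  rw [Derivation.leibniz_div, D_poly D u, D_poly D v, Finset.smul_sum, Finset.smul_sum,
    ← Finset.sum_sub_distrib, Finset.smul_sum]
  refine Finset.sum_congr rfl fun j _ => ?_
  simp only [smul_eq_mul]
  field_simp


end JacAux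

/-- If the gradient `∇f` of a rational function `f = a/b` lies in the row span
(over the function field `ℝ(p₁,…,pₙ)`) of the Jacobian matrix `J(c)` of a tuple
of rational functions `cᵢ = gᵢ/hᵢ`, then `f` is algebraic over `ℝ(c₁,…,c_m)`. -/
theorem gradient_in_rowspan_implies_algebraic {n m : ℕ}
    (g h : Fin m → MvPolynomial (Fin n) ℝ) (hh : ∀ i, h i ≠ 0)
    (a b : MvPolynomial (Fin n) ℝ) (hb : b ≠ 0)
    (ι : MvPolynomial (Fin n) ℝ →+* FractionRing (MvPolynomial (Fin n) ℝ))
    (hι : ι = algebraMap (MvPolynomial (Fin n) ℝ) (FractionRing (MvPolynomial (Fin n) ℝ)))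
    (J : Matrix (Fin m) (Fin n) (FractionRing (MvPolynomial (Fin n) ℝ)))
    (hJ : ∀ i j, J i j =
      (ι (pderiv j (g i)) * ι (h i) - ι (g i) * ι (pderiv j (h i))) / (ι (h i)) ^ 2)
    (gradf : Fin n → FractionRing (MvPolynomial (Fin n) ℝ))
    (hgrad : ∀ j, gradf j =
      (ι (pderiv j a) * ι b - ι a * ι (pderiv j b)) / (ι b) ^ 2)
    (hspan : gradf ∈ Submodule.span (FractionRing (MvPolynomial (Fin n) ℝ))
      (Set.range fun i : Fin m => (J i : Fin n → FractionRing (MvPolynomial (Fin n) ℝ)))) :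
    IsAlgebraic (IntermediateField.adjoin ℝ (Set.range fun i => ι (g i) / ι (h i)))
      (ι a / ι b) := by
  subst hι
  set ι := algebraMap (MvPolynomial (Fin n) ℝ) (FractionRing (MvPolynomial (Fin n) ℝ)) with hι
  set K := IntermediateField.adjoin ℝ (Set.range fun i => ι (g i) / ι (h i)) with hK
  by_contra halg
  have hinj : Function.Injective ι := IsFractionRing.injective _ _
  have hb' : ι b ≠ 0 := fun hc => hb (hinj (by rw [hc, map_zero]))
  have hh' : ∀ i, ι (h i) ≠ 0 := fun i hc => hh i (hinj (by rw [hc, map_zero]))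
  -- the generators
  have htop : ∀ M : IntermediateField ℝ (FractionRing (MvPolynomial (Fin n) ℝ)),
      (∀ x ∈ K, x ∈ M) → (∀ x ∈ (List.ofFn fun j => ι (X j)), x ∈ M) →
      ∀ y, y ∈ M := by
    intro M _ hgens y
    have hpoly : ∀ w : MvPolynomial (Fin n) ℝ, ι w ∈ M := by
      intro w
      induction w using MvPolynomial.induction_on with
      | C r =>
        have h1 : ι (MvPolynomial.C r) = algebraMap ℝ _ r := by
          rw [IsScalarTower.algebraMap_apply ℝ (MvPolynomial (Fin n) ℝ) _,
            MvPolynomial.algebraMap_eq]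
        rw [h1]
        exact M.algebraMap_mem r
      | add p q hp hq => rw [map_add]; exact add_mem hp hq
      | mul_X p i hp =>
        rw [map_mul]
        exact mul_mem hp (hgens _ (by simp [List.mem_ofFn]))
    obtain ⟨u, v, -, rfl⟩ := IsFractionRing.div_surjective (A := MvPolynomial (Fin n) ℝ) y
    exact div_mem (hpoly u) (hpoly v)
  obtain ⟨D, hDK, hDf⟩ := JacAux.exists_global_derivation K halg
    (List.ofFn fun j => ι (X j)) htop
  -- derivative of each c i is zero
  have hDc : ∀ i, ∑ j, J i j * D (ι (X j)) = 0 := by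
    intro i
    have h1 : D (ι (g i) / ι (h i)) = 0 :=
      hDK _ (IntermediateField.subset_adjoin ℝ _ ⟨i, rfl⟩)
    rw [JacAux.D_div D (g i) (h i) (hh' i)] at h1
    rw [← h1]
    exact Finset.sum_congr rfl fun j _ => by rw [hJ i j]
  -- derivative of f
  have hDfe : (1 : FractionRing (MvPolynomial (Fin n) ℝ)) = ∑ j, gradf j * D (ι (X j)) := by
    rw [← hDf, JacAux.D_div D a b hb']
    exact Finset.sum_congr rfl fun j _ => by rw [hgrad j]
  -- use the span hypothesis
  rw [Submodule.mem_span_range_iff_exists_fun] at hspan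
  obtain ⟨lam, hlam⟩ := hspan
  have hgf : ∀ j, gradf j = ∑ i, lam i * J i j := by
    intro j
    rw [← congrFun hlam j, Finset.sum_apply]
    simp [Pi.smul_apply, smul_eq_mul]
  have : (1 : FractionRing (MvPolynomial (Fin n) ℝ)) = 0 := by
    calc (1 : FractionRing (MvPolynomial (Fin n) ℝ))
        = ∑ j, gradf j * D (ι (X j)) := hDfe
      _ = ∑ j, ∑ i, lam i * J i j * D (ι (X j)) := by
          refine Finset.sum_congr rfl fun j _ => ?_
          rw [hgf j, Finset.sum_mul]
      _ = ∑ i, ∑ j, lam i * J i j * D (ι (X j)) := Finset.sum_comm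
      _ = ∑ i, lam i * ∑ j, J i j * D (ι (X j)) := by
          refine Finset.sum_congr rfl fun i _ => ?_
          rw [Finset.mul_sum]
          exact Finset.sum_congr rfl fun j _ => by ring
      _ = 0 := by simp [hDc]
  exact one_ne_zero this
end

section
/- The ideal P generated in ℚ(p)[x, x', …, x^{(N)}, y, y', …, y^{(N)}, u, u', …, u^{(N-1)}] by the polynomials x^{(k+1)} − d^k/dt^k f(x,p,u) for k = 0,…,N−1 and y^{(k)} − d^k/dt^k g(x,p) for k = 0,…,N (where formal differentiation substitutes the system's equations) is a prime ideal: with a suitable lexicographic order, its initial ideal is the monomial prime ideal ⟨x', …, x^{(N)}, y, …, y^{(N)}⟩. -/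
open MvPolynomial

noncomputable section

/-- Variables of the prolonged system: `x_i^{(k)}` for `i < N`, `k ≤ N`;
`y^{(k)}` for `k ≤ N`; and `u_r^{(k)}` for `r < R`, `k ≤ N-1`. -/
abbrev Vars (N R : ℕ) := (Fin N × Fin (N + 1)) ⊕ (Fin (N + 1) ⊕ (Fin R × Fin N))

/-- The action of formal time-differentiation on the variables: each variable
`v^{(k)}` is sent to `v^{(k+1)}` (and to `0` past the highest order retained). -/
def dvar (F : Type) [CommRing F] (N R : ℕ) : Vars N R → MvPolynomial (Vars N R) F
  | .inl (i, k) =>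
      if hk : (k : ℕ) + 1 ≤ N then X (.inl (i, ⟨(k : ℕ) + 1, by omega⟩)) else 0
  | .inr (.inl k) =>
      if hk : (k : ℕ) + 1 ≤ N then X (.inr (.inl ⟨(k : ℕ) + 1, by omega⟩)) else 0
  | .inr (.inr (r, k)) =>
      if hk : (k : ℕ) + 1 < N then X (.inr (.inr (r, ⟨(k : ℕ) + 1, hk⟩))) else 0

/-- Formal differentiation `d/dt` on the prolonged polynomial ring. -/
def ddt (F : Type) [CommRing F] (N R : ℕ) :
    MvPolynomial (Vars N R) F → MvPolynomial (Vars N R) F :=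
  fun q => MvPolynomial.mkDerivation F (dvar F N R) q

/-- Embedding of a polynomial in the state variables `x` and inputs `u` into the
prolonged ring, sending `x_i ↦ x_i^{(0)}` and `u_r ↦ u_r^{(0)}`. -/
def fEmb (F : Type) [CommRing F] (N R : ℕ) [NeZero N]
    (q : MvPolynomial (Fin N ⊕ Fin R) F) : MvPolynomial (Vars N R) F :=
  aeval (fun w : Fin N ⊕ Fin R => match w with
    | .inl i => X (.inl (i, 0))
    | .inr r => X (.inr (.inr (r, 0)))) q

/-- Embedding of a polynomial in the state variables into the prolonged ring. -/
def gEmb (F : Type) [CommRing F] (N R : ℕ) (q : MvPolynomial (Fin N) F) :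
    MvPolynomial (Vars N R) F :=
  aeval (fun i : Fin N => X (.inl (i, 0))) q

/-- The generators `x_i^{(k+1)} − (d/dt)^k f_i` for `k = 0,…,N−1`. -/
def xGens (F : Type) [CommRing F] (N R : ℕ) [NeZero N]
    (f : Fin N → MvPolynomial (Fin N ⊕ Fin R) F) : Set (MvPolynomial (Vars N R) F) :=
  Set.range fun ik : Fin N × Fin N =>
    X (.inl (ik.1, ik.2.succ)) - (ddt F N R)^[(ik.2 : ℕ)] (fEmb F N R (f ik.1))

/-- The generators `y^{(k)} − (d/dt)^k g` for `k = 0,…,N`. -/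
def yGens (F : Type) [CommRing F] (N R : ℕ) (g : MvPolynomial (Fin N) F) :
    Set (MvPolynomial (Vars N R) F) :=
  Set.range fun k : Fin (N + 1) =>
    X (.inr (.inl k)) - (ddt F N R)^[(k : ℕ)] (gEmb F N R g)

end

noncomputable section Aux

namespace Prol

open MvPolynomial

/-- The "derivative order" of a variable. -/
def ord {N R : ℕ} : Vars N R → ℕ
  | .inl (_, k) => (k : ℕ)
  | .inr (.inl k) => (k : ℕ) + 1
  | .inr (.inr _) => 0

/-- Variables of order at most `m`. -/
def S (N R m : ℕ) : Set (Vars N R) := {w | ord w ≤ m}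

variable (F : Type) [Field F] (N R : ℕ)

lemma ddt_supported {m : ℕ} {p : MvPolynomial (Vars N R) F}
    (hp : p ∈ supported F (S N R m)) :
    ddt F N R p ∈ supported F (S N R (m + 1)) := by
  have hp' : p ∈ Algebra.adjoin F (X '' (S N R m)) := hp
  clear hp
  induction hp' using Algebra.adjoin_induction with
  | mem x hx =>
      obtain ⟨w, hw, rfl⟩ := hx
      show mkDerivation F (dvar F N R) (X w) ∈ _
      rw [mkDerivation_X]
      have hw' : ord w ≤ m := hw
      rcases w with ⟨i, k⟩ | k | rk
      · rw [dvar]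
        split
        · refine X_mem_supported.mpr ?_
          have hk : (k : ℕ) ≤ m := by simpa [ord] using hw'
          simp only [S, ord, Set.mem_setOf_eq]
          omega
        · exact zero_mem _
      · rw [dvar]
        split
        · refine X_mem_supported.mpr ?_
          have : (k : ℕ) + 1 ≤ m := by simpa [ord] using hw'
          simp only [S, ord, Set.mem_setOf_eq]
          omega
        · exact zero_mem _
      · rw [dvar]
        split
        · exact X_mem_supported.mpr (by simp [S, ord])
        · exact zero_mem _
  | algebraMap r =>
      show mkDerivation F (dvar F N R) (algebraMap F _ r) ∈ _
      rw [Derivation.map_algebraMap]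
      exact zero_mem _
  | add x y hx hy ihx ihy =>
      show mkDerivation F (dvar F N R) (x + y) ∈ _
      rw [map_add]
      exact add_mem ihx ihy
  | mul x y hx hy ihx ihy =>
      show mkDerivation F (dvar F N R) (x * y) ∈ _
      rw [Derivation.leibniz, smul_eq_mul, smul_eq_mul]
      have hx' : x ∈ supported F (S N R (m + 1)) :=
        supported_mono (fun w (hw : ord w ≤ m) => Nat.le_succ_of_le hw) hx
      have hy' : y ∈ supported F (S N R (m + 1)) :=
        supported_mono (fun w (hw : ord w ≤ m) => Nat.le_succ_of_le hw) hy
      exact add_mem (mul_mem hx' ihy) (mul_mem hy' ihx)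

lemma ddt_iter_supported (k : ℕ) {m : ℕ} {p : MvPolynomial (Vars N R) F}
    (hp : p ∈ supported F (S N R m)) :
    (ddt F N R)^[k] p ∈ supported F (S N R (m + k)) := by
  induction k generalizing p m with
  | zero => simpa using hp
  | succ k ih =>
      rw [Function.iterate_succ_apply]
      have := ih (ddt_supported F N R hp)
      simpa [Nat.add_assoc, Nat.add_comm 1 k] using this

lemma aeval_supported {σ : Type} (h : σ → MvPolynomial (Vars N R) F) (s : Set (Vars N R))
    (hh : ∀ i, h i ∈ supported F s) (p : MvPolynomial σ F) :
    aeval h p ∈ supported F s := by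
  induction p using MvPolynomial.induction_on with
  | C a => rw [aeval_C]; exact Subalgebra.algebraMap_mem _ a
  | add p q hp hq => rw [map_add]; exact add_mem hp hq
  | mul_X p i hp => rw [map_mul, aeval_X]; exact mul_mem hp (hh i)

variable [NeZero N]

lemma fEmb_supported (p : MvPolynomial (Fin N ⊕ Fin R) F) :
    fEmb F N R p ∈ supported F (S N R 0) := by
  refine aeval_supported F N R _ _ (fun i => ?_) p
  rcases i with i | r
  · exact X_mem_supported.mpr (by simp [S, ord])
  · exact X_mem_supported.mpr (by simp [S, ord])

lemma gEmb_supported (p : MvPolynomial (Fin N) F) :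
    gEmb F N R p ∈ supported F (S N R 0) := by
  refine aeval_supported F N R _ _ (fun i => ?_) p
  exact X_mem_supported.mpr (by simp [S, ord])

variable (f : Fin N → MvPolynomial (Fin N ⊕ Fin R) F) (g : MvPolynomial (Fin N) F)

/-- The value substituted for each variable: eliminated variables are sent to the
right-hand side of the corresponding generator; free variables are fixed. -/
def sv : Vars N R → MvPolynomial (Vars N R) F
  | .inl (i, k) =>
      if _ : (k : ℕ) = 0 then X (.inl (i, k))
      else (ddt F N R)^[(k : ℕ) - 1] (fEmb F N R (f i))
  | .inr (.inl k) => (ddt F N R)^[(k : ℕ)] (gEmb F N R g)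
  | .inr (.inr rk) => X (.inr (.inr rk))

lemma sv_supported (v : Vars N R) :
    sv F N R f g v ∈ supported F (S N R (ord v - 1)) := by
  rcases v with ⟨i, k⟩ | k | rk
  · rw [sv]
    split
    · exact X_mem_supported.mpr (by simp_all [S, ord])
    · have := ddt_iter_supported F N R ((k : ℕ) - 1) (fEmb_supported F N R (f i))
      simpa [S, ord] using this
  · have := ddt_iter_supported F N R (k : ℕ) (gEmb_supported F N R g)
    simpa [S, ord, sv] using this
  · exact X_mem_supported.mpr (by simp [S, ord])

/-- One pass of substitution. -/
def tau : MvPolynomial (Vars N R) F → MvPolynomial (Vars N R) F :=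
  fun p => aeval (sv F N R f g) p

lemma tau_supported {m : ℕ} {p : MvPolynomial (Vars N R) F}
    (hp : p ∈ supported F (S N R (m + 1))) :
    tau F N R f g p ∈ supported F (S N R m) := by
  rw [mem_supported]
  intro w hw
  have hw' : w ∈ (bind₁ (sv F N R f g) p).vars := hw
  obtain ⟨v, hv, hw2⟩ := mem_vars_bind₁ _ _ hw'
  have h1 : ord v ≤ m + 1 := mem_supported.mp hp (Finset.mem_coe.mpr hv)
  have h2 : ord w ≤ ord v - 1 :=
    mem_supported.mp (sv_supported F N R f g v) (Finset.mem_coe.mpr hw2)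
  show ord w ≤ m
  omega

lemma tau_fixed {p : MvPolynomial (Vars N R) F}
    (hp : p ∈ supported F (S N R 0)) : tau F N R f g p = p := by
  have key : eval₂Hom (algebraMap F (MvPolynomial (Vars N R) F)) (sv F N R f g) p =
      eval₂Hom (algebraMap F (MvPolynomial (Vars N R) F)) X p := by
    refine eval₂Hom_congr' rfl (fun v hv _ => ?_) rfl
    have h0 : ord v ≤ 0 := mem_supported.mp hp (Finset.mem_coe.mpr hv)
    rcases v with ⟨i, k⟩ | k | rk
    · have : (k : ℕ) = 0 := by simpa [ord] using h0
      rw [sv, dif_pos this]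
    · exact absurd h0 (by simp [ord])
    · rfl
  have h1 : tau F N R f g p =
      eval₂Hom (algebraMap F (MvPolynomial (Vars N R) F)) (sv F N R f g) p := rfl
  have h2 : eval₂Hom (algebraMap F (MvPolynomial (Vars N R) F)) X p = p :=
    aeval_X_left_apply p
  rw [h1, key, h2]

lemma tau_stab (m : ℕ) {p : MvPolynomial (Vars N R) F}
    (hp : p ∈ supported F (S N R m)) :
    tau F N R f g ((tau F N R f g)^[m] p) = (tau F N R f g)^[m] p := by
  induction m generalizing p with
  | zero => simpa using tau_fixed F N R f g hp
  | succ m ih =>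
      rw [Function.iterate_succ_apply]
      exact ih (tau_supported F N R f g hp)

lemma tau_iter_add (m : ℕ) (a b : MvPolynomial (Vars N R) F) :
    (tau F N R f g)^[m] (a + b) = (tau F N R f g)^[m] a + (tau F N R f g)^[m] b := by
  induction m generalizing a b with
  | zero => simp
  | succ m ih =>
      simp only [Function.iterate_succ_apply]
      rw [show tau F N R f g (a + b) = tau F N R f g a + tau F N R f g b from map_add _ _ _, ih]

lemma tau_iter_mul (m : ℕ) (a b : MvPolynomial (Vars N R) F) :
    (tau F N R f g)^[m] (a * b) = (tau F N R f g)^[m] a * (tau F N R f g)^[m] b := by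
  induction m generalizing a b with
  | zero => simp
  | succ m ih =>
      simp only [Function.iterate_succ_apply]
      rw [show tau F N R f g (a * b) = tau F N R f g a * tau F N R f g b from map_mul _ _ _, ih]

lemma tau_iter_one (m : ℕ) : (tau F N R f g)^[m] 1 = 1 := by
  induction m with
  | zero => simp
  | succ m ih =>
      rw [Function.iterate_succ_apply,
        show tau F N R f g 1 = 1 from map_one _, ih]

lemma tau_iter_zero (m : ℕ) : (tau F N R f g)^[m] 0 = 0 := by
  induction m with
  | zero => simp
  | succ m ih =>
      rw [Function.iterate_succ_apply,
        show tau F N R f g 0 = 0 from map_zero _, ih]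

lemma tau_iter_sub (m : ℕ) (a b : MvPolynomial (Vars N R) F) :
    (tau F N R f g)^[m] (a - b) = (tau F N R f g)^[m] a - (tau F N R f g)^[m] b := by
  induction m generalizing a b with
  | zero => simp
  | succ m ih =>
      simp only [Function.iterate_succ_apply]
      rw [show tau F N R f g (a - b) = tau F N R f g a - tau F N R f g b from map_sub _ _ _, ih]

/-- Each "triangular" difference `X v - sv v` lies in the span of the generators. -/
lemma gen_mem (v : Vars N R) :
    X v - sv F N R f g v ∈ Ideal.span (xGens F N R f ∪ yGens F N R g) := by
  rcases v with ⟨i, k⟩ | k | rk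
  · rw [sv]
    split
    · simp
    · rename_i hk
      have hkN : (k : ℕ) < N + 1 := k.isLt
      set j : Fin N := ⟨(k : ℕ) - 1, by omega⟩ with hj
      have hjs : j.succ = k := by
        apply Fin.ext
        simp only [Fin.val_succ, hj]
        omega
      have : X (Sum.inl (i, k)) - (ddt F N R)^[(k : ℕ) - 1] (fEmb F N R (f i)) ∈
          xGens F N R f := by
        refine ⟨(i, j), ?_⟩
        beta_reduce
        rw [hjs]
      exact Ideal.subset_span (Set.mem_union_left _ this)
  · refine Ideal.subset_span (Set.mem_union_right _ ?_)
    exact ⟨k, rfl⟩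
  · simp [sv]

lemma sub_tau_mem (p : MvPolynomial (Vars N R) F) :
    p - tau F N R f g p ∈ Ideal.span (xGens F N R f ∪ yGens F N R g) := by
  induction p using MvPolynomial.induction_on with
  | C a =>
      have : tau F N R f g (C a) = C a := by
        show aeval (sv F N R f g) (C a) = C a
        rw [aeval_C]; rfl
      rw [this, sub_self]; exact zero_mem _
  | add p q hp hq =>
      have : tau F N R f g (p + q) = tau F N R f g p + tau F N R f g q := map_add _ _ _
      rw [this, show p + q - (tau F N R f g p + tau F N R f g q) =
        (p - tau F N R f g p) + (q - tau F N R f g q) by ring]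
      exact add_mem hp hq
  | mul_X p v hp =>
      have h1 : tau F N R f g (p * X v) = tau F N R f g p * sv F N R f g v := by
        show aeval (sv F N R f g) (p * X v) = _
        rw [map_mul, aeval_X]; rfl
      rw [h1, show p * X v - tau F N R f g p * sv F N R f g v =
        (p - tau F N R f g p) * X v + tau F N R f g p * (X v - sv F N R f g v) by ring]
      exact add_mem (Ideal.mul_mem_right _ _ hp)
        (Ideal.mul_mem_left _ _ (gen_mem F N R f g v))

lemma sub_tau_iter_mem (m : ℕ) (p : MvPolynomial (Vars N R) F) :
    p - (tau F N R f g)^[m] p ∈ Ideal.span (xGens F N R f ∪ yGens F N R g) := by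
  induction m generalizing p with
  | zero => simpa using zero_mem _
  | succ m ih =>
      rw [Function.iterate_succ_apply,
        show p - (tau F N R f g)^[m] (tau F N R f g p) =
          (p - tau F N R f g p) +
            (tau F N R f g p - (tau F N R f g)^[m] (tau F N R f g p)) by ring]
      exact add_mem (sub_tau_mem F N R f g p) (ih _)

/-- The generators are killed by `N + 1` passes of the substitution. -/
lemma gen_ker {x : MvPolynomial (Vars N R) F}
    (hx : x ∈ xGens F N R f ∪ yGens F N R g) :
    (tau F N R f g)^[N + 1] x = 0 := by
  rcases hx with ⟨⟨i, j⟩, rfl⟩ | ⟨k, rfl⟩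
  · set r : MvPolynomial (Vars N R) F := (ddt F N R)^[(j : ℕ)] (fEmb F N R (f i)) with hr
    have hrs : r ∈ supported F (S N R N) := by
      have := ddt_iter_supported F N R (j : ℕ) (fEmb_supported F N R (f i))
      refine supported_mono ?_ this
      intro w hw
      have hj : (j : ℕ) < N := j.isLt
      simp only [S, Set.mem_setOf_eq] at hw ⊢
      omega
    rw [tau_iter_sub]
    have h1 : (tau F N R f g)^[N + 1] (X (Sum.inl (i, j.succ))) = (tau F N R f g)^[N] r := by
      rw [Function.iterate_succ_apply]
      congr 1
      show aeval (sv F N R f g) (X (Sum.inl (i, j.succ))) = r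
      rw [aeval_X, sv, dif_neg (by simp), hr]
      simp
    have h2 : (tau F N R f g)^[N + 1] r = (tau F N R f g)^[N] r := by
      rw [Function.iterate_succ_apply']
      exact tau_stab F N R f g N hrs
    rw [h1, h2, sub_self]
  · set r : MvPolynomial (Vars N R) F := (ddt F N R)^[(k : ℕ)] (gEmb F N R g) with hr
    have hrs : r ∈ supported F (S N R N) := by
      have := ddt_iter_supported F N R (k : ℕ) (gEmb_supported F N R g)
      refine supported_mono ?_ this
      intro w hw
      have hk : (k : ℕ) < N + 1 := k.isLt
      simp only [S, Set.mem_setOf_eq] at hw ⊢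
      omega
    rw [tau_iter_sub]
    have h1 : (tau F N R f g)^[N + 1] (X (Sum.inr (Sum.inl k))) = (tau F N R f g)^[N] r := by
      rw [Function.iterate_succ_apply]
      congr 1
      show aeval (sv F N R f g) (X (Sum.inr (Sum.inl k))) = r
      rw [aeval_X]; rfl
    have h2 : (tau F N R f g)^[N + 1] r = (tau F N R f g)^[N] r := by
      rw [Function.iterate_succ_apply']
      exact tau_stab F N R f g N hrs
    rw [h1, h2, sub_self]

lemma mem_ker {p : MvPolynomial (Vars N R) F}
    (hp : p ∈ Ideal.span (xGens F N R f ∪ yGens F N R g)) :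
    (tau F N R f g)^[N + 1] p = 0 := by
  induction hp using Submodule.span_induction with
  | mem x hx => exact gen_ker F N R f g hx
  | zero => exact tau_iter_zero F N R f g _
  | add x y hx hy ihx ihy => rw [tau_iter_add, ihx, ihy, add_zero]
  | smul a x hx ihx =>
      rw [smul_eq_mul, tau_iter_mul, ihx, mul_zero]

lemma ker_mem {p : MvPolynomial (Vars N R) F}
    (hp : (tau F N R f g)^[N + 1] p = 0) :
    p ∈ Ideal.span (xGens F N R f ∪ yGens F N R g) := by
  have := sub_tau_iter_mem F N R f g (N + 1) p
  rwa [hp, sub_zero] at this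

end Prol

end Aux

/-- The ideal `P` generated in `ℚ(p)[x,…,x^{(N)},y,…,y^{(N)},u,…,u^{(N-1)}]` by
`x^{(k+1)} − (d/dt)^k f` for `k = 0,…,N−1` and `y^{(k)} − (d/dt)^k g` for
`k = 0,…,N` is prime (with a suitable lexicographic order its initial ideal is
the monomial prime `⟨x',…,x^{(N)},y,…,y^{(N)}⟩`). -/
theorem prolongation_ideal_isPrime (q N R : ℕ) [NeZero N]
    (f : Fin N → MvPolynomial (Fin N ⊕ Fin R) (FractionRing (MvPolynomial (Fin q) ℚ)))
    (g : MvPolynomial (Fin N) (FractionRing (MvPolynomial (Fin q) ℚ))) :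
    (Ideal.span
      (xGens (FractionRing (MvPolynomial (Fin q) ℚ)) N R f ∪
        yGens (FractionRing (MvPolynomial (Fin q) ℚ)) N R g)).IsPrime := by
  constructor
  · intro htop
    have h1 : (1 : MvPolynomial (Vars N R) (FractionRing (MvPolynomial (Fin q) ℚ))) ∈
        Ideal.span (xGens (FractionRing (MvPolynomial (Fin q) ℚ)) N R f ∪
          yGens (FractionRing (MvPolynomial (Fin q) ℚ)) N R g) := htop ▸ Submodule.mem_top
    have := Prol.mem_ker _ N R f g h1
    rw [Prol.tau_iter_one] at this
    exact one_ne_zero this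
  · intro a b hab
    have h := Prol.mem_ker _ N R f g hab
    rw [Prol.tau_iter_mul] at h
    rcases mul_eq_zero.mp h with h' | h'
    · exact Or.inl (Prol.ker_mem _ N R f g h')
    · exact Or.inr (Prol.ker_mem _ N R f g h')
end

section
/- For the two 3-compartment models with coefficient maps c(a₀₁,a₂₁,a₃₂) = (a₃₂+a₀₁+a₂₁, a₀₁a₃₂+a₂₁a₃₂, a₂₁a₃₂, a₃₂, a₀₁a₃₂+a₂₁a₃₂) and c'(b₀₂,b₂₁,b₃₂) = (b₂₁+b₀₂+b₃₂, b₂₁b₀₂+b₂₁b₃₂, b₂₁b₃₂, b₃₂, b₃₂b₂₁), the vanishing ideal of the image of c in ℚ[c₁,…,c₅] contains c₂ − c₅ and c₁c₄ − c₄² − c₅, while c₂ − c₅ does not vanish on the image of c' (e.g., at b₀₂ = b₂₁ = b₃₂ = 1, c₂' = 2 ≠ 1 = c₅'). Hence the two models are generically distinguishable. -/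
/-- Coefficient map of the first 3-compartment model. -/
noncomputable def cMap (a01 a21 a32 : ℝ) : Fin 5 → ℝ :=
  ![a32 + a01 + a21, a01 * a32 + a21 * a32, a21 * a32, a32, a01 * a32 + a21 * a32]

/-- Coefficient map of the second 3-compartment model. -/
noncomputable def cMap' (b02 b21 b32 : ℝ) : Fin 5 → ℝ :=
  ![b21 + b02 + b32, b21 * b02 + b21 * b32, b21 * b32, b32, b32 * b21]

/-- The relations `c₂ − c₅` and `c₁c₄ − c₄² − c₅` vanish identically on the
image of `c`, while `c₂ − c₅` fails to vanish at `c'(1,1,1)` (where `c₂' = 2`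
and `c₅' = 1`); hence the images of the two coefficient maps differ and the
two models are generically distinguishable. -/
theorem threeCompartment_distinguishable :
    (∀ a01 a21 a32 : ℝ,
      cMap a01 a21 a32 1 - cMap a01 a21 a32 4 = 0 ∧
      cMap a01 a21 a32 0 * cMap a01 a21 a32 3 - (cMap a01 a21 a32 3) ^ 2 -
        cMap a01 a21 a32 4 = 0) ∧
    (cMap' 1 1 1 1 = 2 ∧ cMap' 1 1 1 4 = 1) ∧
    Set.range (fun t : ℝ × ℝ × ℝ => cMap t.1 t.2.1 t.2.2) ≠
      Set.range (fun t : ℝ × ℝ × ℝ => cMap' t.1 t.2.1 t.2.2) := by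
  refine ⟨fun a01 a21 a32 => ⟨?_, ?_⟩, ⟨?_, ?_⟩, ?_⟩
  · simp [cMap]
  · simp [cMap]; ring
  · norm_num [cMap']
  · norm_num [cMap']; rfl
  · intro h
    have hmem : cMap' 1 1 1 ∈ Set.range (fun t : ℝ × ℝ × ℝ => cMap t.1 t.2.1 t.2.2) := by
      rw [h]; exact ⟨(1, 1, 1), rfl⟩
    obtain ⟨⟨a, b, c⟩, hab⟩ := hmem
    have h1 := congrFun hab 1
    have h4 := congrFun hab 4
    simp only [cMap, cMap'] at h1 h4
    norm_num at h1 h4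
    have h4' : a * c + b * c = 1 := h4
    rw [h4'] at h1
    norm_num at h1
end

section
/- For the two coefficient maps c(a₀₁,a₂₁,a₃₂) = (a₃₂+a₀₁+a₂₁, a₀₁a₃₂+a₂₁a₃₂, a₂₁a₃₂) and c'(b₀₂,b₂₁,b₃₂) = (b₂₁+b₀₂+b₃₂, b₂₁b₀₂+b₂₁b₃₂, b₂₁b₃₂) restricted to the positive octant, the images coincide: for every (b₀₂,b₂₁,b₃₂) with all coordinates positive, the point (a₀₁,a₂₁,a₃₂) = (b₀₂b₂₁/(b₀₂+b₃₂), b₂₁b₃₂/(b₀₂+b₃₂), b₀₂+b₃₂) has positive coordinates and satisfies c(a) = c'(b), and symmetrically (b₀₂,b₂₁,b₃₂) = (a₀₁a₃₂/(a₀₁+a₂₁), a₀₁+a₂₁, a₂₁a₃₂/(a₀₁+a₂₁)) works in the other direction. -/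
/-- Indistinguishability of the two 3-compartment models over the positive
octant: the images of the coefficient maps
`c(a₀₁,a₂₁,a₃₂) = (a₃₂+a₀₁+a₂₁, a₀₁a₃₂+a₂₁a₃₂, a₂₁a₃₂)` and
`c'(b₀₂,b₂₁,b₃₂) = (b₂₁+b₀₂+b₃₂, b₂₁b₀₂+b₂₁b₃₂, b₂₁b₃₂)` coincide, via the
explicit mutually inverse substitutions. -/
theorem threeCompartment_indistinguishable :
    (∀ b02 b21 b32 : ℝ, 0 < b02 → 0 < b21 → 0 < b32 →
      0 < b02 * b21 / (b02 + b32) ∧ 0 < b21 * b32 / (b02 + b32) ∧ 0 < b02 + b32 ∧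
      (b02 + b32) + b02 * b21 / (b02 + b32) + b21 * b32 / (b02 + b32)
          = b21 + b02 + b32 ∧
      (b02 * b21 / (b02 + b32)) * (b02 + b32) +
          (b21 * b32 / (b02 + b32)) * (b02 + b32) = b21 * b02 + b21 * b32 ∧
      (b21 * b32 / (b02 + b32)) * (b02 + b32) = b21 * b32) ∧
    (∀ a01 a21 a32 : ℝ, 0 < a01 → 0 < a21 → 0 < a32 →
      0 < a01 * a32 / (a01 + a21) ∧ 0 < a01 + a21 ∧ 0 < a21 * a32 / (a01 + a21) ∧
      (a01 + a21) + a01 * a32 / (a01 + a21) + a21 * a32 / (a01 + a21)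
          = a32 + a01 + a21 ∧
      (a01 + a21) * (a01 * a32 / (a01 + a21)) +
          (a01 + a21) * (a21 * a32 / (a01 + a21)) = a01 * a32 + a21 * a32 ∧
      (a01 + a21) * (a21 * a32 / (a01 + a21)) = a21 * a32) := by
  constructor
  · intro b02 b21 b32 h1 h2 h3
    have hs : (0:ℝ) < b02 + b32 := by linarith
    have hs' : b02 + b32 ≠ 0 := ne_of_gt hs
    refine ⟨div_pos (mul_pos h1 h2) hs, div_pos (mul_pos h2 h3) hs, hs, ?_, ?_, ?_⟩ <;>
      field_simp <;> ring
  · intro a01 a21 a32 h1 h2 h3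
    have hs : (0:ℝ) < a01 + a21 := by linarith
    have hs' : a01 + a21 ≠ 0 := ne_of_gt hs
    refine ⟨div_pos (mul_pos h1 h3) hs, hs, div_pos (mul_pos h2 h3) hs, ?_, ?_, ?_⟩ <;>
      field_simp <;> ring
end
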